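/- Let u : G_k → D be a group homomorphism such that u(a_i) ∈ {1, a, b} for every i, and such that u is surjective (equivalently, both a and b occur among the values u(a_i)). Then the preimage under u of the subgroup of D generated by {aba, bab} is a subgroup of G_k of index 3. -/

import Mathlib

/-- `Gk k` is the free product of `k+1` copies of the cyclic group of order two. -/
abbrev Gk (k : ℕ) : Type :=
  Monoid.CoprodI (fun _ : Fin (k + 1) => Multiplicative (ZMod 2))

/-- The canonical generator `a_i` of `Gk k`. -/
def gen (k : ℕ) (i : Fin (k + 1)) : Gk k :=
  Monoid.CoprodI.of (M := fun _ : Fin (k + 1) => Multiplicative (ZMod 2)) (i := i)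
    (Multiplicative.ofAdd (1 : ZMod 2))

/-- `D` is the infinite dihedral group: the free product of two copies of the
cyclic group of order two. -/
abbrev D : Type := Monoid.CoprodI (fun _ : Fin 2 => Multiplicative (ZMod 2))

/-- The first canonical generator `a` of `D`. -/
def genD_a : D :=
  Monoid.CoprodI.of (M := fun _ : Fin 2 => Multiplicative (ZMod 2)) (i := (0 : Fin 2))
    (Multiplicative.ofAdd (1 : ZMod 2))

/-- The second canonical generator `b` of `D`. -/
def genD_b : D :=
  Monoid.CoprodI.of (M := fun _ : Fin 2 => Multiplicative (ZMod 2)) (i := (1 : Fin 2))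
    (Multiplicative.ofAdd (1 : ZMod 2))

lemma c2cases : ∀ x : Multiplicative (ZMod 2), x = 1 ∨ x = Multiplicative.ofAdd (1 : ZMod 2) := by
  decide

def homC2 (σ : Equiv.Perm (Fin 3)) (hσ : σ * σ = 1) :
    Multiplicative (ZMod 2) →* Equiv.Perm (Fin 3) where
  toFun m := σ ^ (Multiplicative.toAdd m).val
  map_one' := by norm_num
  map_mul' x y := by
    have h1 : ((1 : ZMod 2) + 1).val = 0 := by decide
    have h2 : ((1 : ZMod 2)).val = 1 := by decide
    have h0 : ((0 : ZMod 2)).val = 0 := by decide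
    rcases c2cases x with h | h <;> rcases c2cases y with h' | h' <;>
      subst h <;> subst h' <;> simp [h1, h2, h0, pow_succ, hσ]

def phi : D →* Equiv.Perm (Fin 3) :=
  Monoid.CoprodI.lift ![homC2 (Equiv.swap 0 1) (by simp), homC2 (Equiv.swap 1 2) (by simp)]

lemma phi_a : phi genD_a = Equiv.swap 0 1 := by
  rw [genD_a, phi, Monoid.CoprodI.lift_of]
  show Equiv.swap 0 1 ^ ((1 : ZMod 2)).val = _
  norm_num [show ((1 : ZMod 2)).val = 1 by decide]

lemma phi_b : phi genD_b = Equiv.swap 1 2 := by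
  rw [genD_b, phi, Monoid.CoprodI.lift_of]
  show Equiv.swap 1 2 ^ ((1 : ZMod 2)).val = _
  norm_num [show ((1 : ZMod 2)).val = 1 by decide]

lemma a_sq : genD_a * genD_a = 1 := by
  rw [genD_a, ← MonoidHom.map_mul]
  rw [show (Multiplicative.ofAdd (1 : ZMod 2)) * (Multiplicative.ofAdd (1 : ZMod 2)) = 1
    by decide, MonoidHom.map_one]

lemma b_sq : genD_b * genD_b = 1 := by
  rw [genD_b, ← MonoidHom.map_mul]
  rw [show (Multiplicative.ofAdd (1 : ZMod 2)) * (Multiplicative.ofAdd (1 : ZMod 2)) = 1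
    by decide, MonoidHom.map_one]

lemma a_inv : genD_a⁻¹ = genD_a := by
  rw [inv_eq_iff_mul_eq_one, a_sq]

lemma b_inv : genD_b⁻¹ = genD_b := by
  rw [inv_eq_iff_mul_eq_one, b_sq]

/-- The subgroup of D generated by aba and bab. -/
noncomputable def Hsub : Subgroup D :=
  Subgroup.closure ({genD_a * genD_b * genD_a, genD_b * genD_a * genD_b} : Set D)

lemma aba_mem : genD_a * genD_b * genD_a ∈ Hsub :=
  Subgroup.subset_closure (by simp)

lemma bab_mem : genD_b * genD_a * genD_b ∈ Hsub :=
  Subgroup.subset_closure (by simp)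

/-- Every element of D lies in one of the cosets H, aH, bH. -/
lemma coset_cover (g : D) :
    ∃ t ∈ ({1, genD_a, genD_b} : Set D), t⁻¹ * g ∈ Hsub := by
  have key : ∀ g : D, ∀ t ∈ ({1, genD_a, genD_b} : Set D),
      ∃ t' ∈ ({1, genD_a, genD_b} : Set D), t'⁻¹ * (g * t) ∈ Hsub := by
    intro g
    induction g using Monoid.CoprodI.induction_on with
    | one => intro t ht; exact ⟨t, ht, by simpa using Hsub.one_mem⟩
    | mul x y hx hy =>
      intro t ht
      obtain ⟨t₁, ht₁, hy₁⟩ := hy t ht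
      obtain ⟨t₂, ht₂, hx₂⟩ := hx t₁ ht₁
      refine ⟨t₂, ht₂, ?_⟩
      have : t₂⁻¹ * (x * y * t) = (t₂⁻¹ * (x * t₁)) * (t₁⁻¹ * (y * t)) := by
        group
      rw [this]
      exact Hsub.mul_mem hx₂ hy₁
    | of i m =>
      rcases c2cases m with h | h
      · subst h
        intro t ht
        exact ⟨t, ht, by simpa using Hsub.one_mem⟩
      · subst h
        have hi : Monoid.CoprodI.of (M := fun _ : Fin 2 => Multiplicative (ZMod 2)) (i := i)
            (Multiplicative.ofAdd (1 : ZMod 2)) = genD_a ∨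
            Monoid.CoprodI.of (M := fun _ : Fin 2 => Multiplicative (ZMod 2)) (i := i)
            (Multiplicative.ofAdd (1 : ZMod 2)) = genD_b := by
          fin_cases i
          · left; rfl
          · right; rfl
        rcases hi with h | h <;> rw [h] <;> intro t ht <;>
          simp only [Set.mem_insert_iff, Set.mem_singleton_iff] at ht
        · rcases ht with rfl | rfl | rfl
          · exact ⟨genD_a, by simp, by rw [a_inv, mul_one, a_sq]; exact Hsub.one_mem⟩
          · exact ⟨1, by simp, by rw [inv_one, one_mul, a_sq]; exact Hsub.one_mem⟩
          · exact ⟨genD_b, by simp, by rw [b_inv, ← mul_assoc]; exact bab_mem⟩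
        · rcases ht with rfl | rfl | rfl
          · exact ⟨genD_b, by simp, by rw [b_inv, mul_one, b_sq]; exact Hsub.one_mem⟩
          · exact ⟨genD_a, by simp, by rw [a_inv, ← mul_assoc]; exact aba_mem⟩
          · exact ⟨1, by simp, by rw [inv_one, one_mul, b_sq]; exact Hsub.one_mem⟩
  obtain ⟨t, ht, h⟩ := key g 1 (by simp)
  exact ⟨t, ht, by rwa [mul_one] at h⟩

/-- H is contained in the preimage of the stabilizer of 1 under phi. -/
lemma H_le_stab : Hsub ≤ Subgroup.comap phi (MulAction.stabilizer (Equiv.Perm (Fin 3)) (1 : Fin 3)) := by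
  rw [Hsub, Subgroup.closure_le]
  rintro x (rfl | rfl)
  · show phi _ ∈ MulAction.stabilizer _ _
    rw [map_mul, map_mul, phi_a, phi_b]
    show (Equiv.swap 0 1 * Equiv.swap 1 2 * Equiv.swap 0 1) • (1 : Fin 3) = 1
    decide
  · show phi _ ∈ MulAction.stabilizer _ _
    rw [map_mul, map_mul, phi_a, phi_b]
    show (Equiv.swap 1 2 * Equiv.swap 0 1 * Equiv.swap 1 2) • (1 : Fin 3) = 1
    decide

lemma a_not_mem : genD_a ∉ Hsub := by
  intro h
  have := H_le_stab h
  simp only [Subgroup.mem_comap, phi_a] at this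
  have : (Equiv.swap 0 1 : Equiv.Perm (Fin 3)) • (1 : Fin 3) = 1 := this
  revert this; decide

lemma b_not_mem : genD_b ∉ Hsub := by
  intro h
  have := H_le_stab h
  simp only [Subgroup.mem_comap, phi_b] at this
  have : (Equiv.swap 1 2 : Equiv.Perm (Fin 3)) • (1 : Fin 3) = 1 := this
  revert this; decide

lemma ab_not_mem : genD_a⁻¹ * genD_b ∉ Hsub := by
  intro h
  have := H_le_stab h
  simp only [Subgroup.mem_comap, map_mul, map_inv, phi_a, phi_b] at this
  have : ((Equiv.swap 0 1)⁻¹ * Equiv.swap 1 2 : Equiv.Perm (Fin 3)) • (1 : Fin 3) = 1 := this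
  revert this; decide

lemma Hsub_index : Hsub.index = 3 := by
  have hF : Function.Surjective
      (![QuotientGroup.mk 1, QuotientGroup.mk genD_a, QuotientGroup.mk genD_b] :
        Fin 3 → D ⧸ Hsub) := by
    intro q
    induction q using QuotientGroup.induction_on with
    | H g =>
      obtain ⟨t, ht, hg⟩ := coset_cover g
      simp only [Set.mem_insert_iff, Set.mem_singleton_iff] at ht
      have heq : ∀ t : D, t⁻¹ * g ∈ Hsub → (QuotientGroup.mk t : D ⧸ Hsub) = QuotientGroup.mk g :=
        fun t h => (QuotientGroup.eq).mpr h
      rcases ht with rfl | rfl | rfl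
      · exact ⟨0, heq _ hg⟩
      · exact ⟨1, heq _ hg⟩
      · exact ⟨2, heq _ hg⟩
  have hfin : Finite (D ⧸ Hsub) := Finite.of_surjective _ hF
  have hle : Hsub.index ≤ 3 := by
    have := Nat.card_le_card_of_surjective _ hF
    simpa [Subgroup.index] using this
  have hinj : Function.Injective
      (![QuotientGroup.mk 1, QuotientGroup.mk genD_a, QuotientGroup.mk genD_b] :
        Fin 3 → D ⧸ Hsub) := by
    have h1a : (QuotientGroup.mk (1 : D) : D ⧸ Hsub) ≠ QuotientGroup.mk genD_a := by
      rw [Ne, QuotientGroup.eq, inv_one, one_mul]; exact a_not_mem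
    have h1b : (QuotientGroup.mk (1 : D) : D ⧸ Hsub) ≠ QuotientGroup.mk genD_b := by
      rw [Ne, QuotientGroup.eq, inv_one, one_mul]; exact b_not_mem
    have hab : (QuotientGroup.mk genD_a : D ⧸ Hsub) ≠ QuotientGroup.mk genD_b := by
      rw [Ne, QuotientGroup.eq]; exact ab_not_mem
    intro i j hij
    fin_cases i <;> fin_cases j <;> simp_all
  have hge : 3 ≤ Hsub.index := by
    have := Nat.card_le_card_of_injective _ hinj
    simpa [Subgroup.index] using this
  omega

theorem stmt16 (k : ℕ) (u : Gk k →* D)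
    (hvals : ∀ i : Fin (k + 1), u (gen k i) ∈ ({1, genD_a, genD_b} : Set D))
    (hsurj : Function.Surjective u) :
    (Subgroup.comap u (Subgroup.closure
      ({genD_a * genD_b * genD_a, genD_b * genD_a * genD_b} : Set D))).index = 3 := by
  rw [Subgroup.index_comap_of_surjective _ hsurj]
  exact Hsub_index
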